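/- arXiv:1304.7539 — 2 statements merged into one kernel-verified Lean document; each statement's English description precedes it below -/
import Mathlib

section
/- Let N ∈ ℕ and let h₁,…,h_N ∈ ℂ be window weights with Σ_n |h_n|² = 1 and Σ_n |h_n|² c_n² > 0, where c_n = n − (N+1)/2; set τ = (Σ_n |h_n|² c_n²)^{−1/2}. For every ω ∈ ℝ, the minimum over all (g₁,g₂) ∈ ℂ² with |g₁|² + |g₂|² = 1 of ‖g₁ x(ω) + g₂ τ x′(ω)‖² equals 1 − τ·|Σ_{n=1}^N |h_n|² c_n|; in particular this squared smallest singular value of the tangent-plane matrix T(ω) = [x(ω), τ x′(ω)] is the same for all ω. -/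
open scoped BigOperators

open scoped ComplexInnerProductSpace

/-- `c_n = n − (N+1)/2` for `n = 1,…,N` (here `n : Fin N` is zero-based). -/
noncomputable def cN (N : ℕ) (n : Fin N) : ℝ := ((n : ℝ) + 1) - ((N : ℝ) + 1) / 2

/-- Windowed sinusoid: `n`-th entry `h_n e^{iω c_n}`. -/
noncomputable def sinusoid {N : ℕ} (h : Fin N → ℂ) (ω : ℝ) : EuclideanSpace ℂ (Fin N) :=
  WithLp.toLp 2 (fun n => h n * Complex.exp (Complex.I * (ω * cN N n)))

/-- Entrywise derivative of the windowed sinusoid: `n`-th entry `i c_n h_n e^{iω c_n}`. -/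
noncomputable def sinusoidD {N : ℕ} (h : Fin N → ℂ) (ω : ℝ) : EuclideanSpace ℂ (Fin N) :=
  WithLp.toLp 2 (fun n => Complex.I * (cN N n : ℂ) * h n * Complex.exp (Complex.I * (ω * cN N n)))

/-- `τ = (Σ_n |h_n|² c_n²)^{-1/2} = 1/‖x′(ω)‖`. -/
noncomputable def tauW {N : ℕ} (h : Fin N → ℂ) : ℝ :=
  (Real.sqrt (∑ n, ‖h n‖ ^ 2 * (cN N n) ^ 2))⁻¹

/-- The squared smallest singular value of the tangent-plane matrix `T(ω) = [x(ω), τ x′(ω)]`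
equals `1 − τ |Σ_n |h_n|² c_n|`, independently of `ω`: it is the minimum of
`‖g₁ x(ω) + g₂ τ x′(ω)‖²` over `(g₁,g₂) ∈ ℂ²` with `|g₁|² + |g₂|² = 1`. -/
theorem stmt10 {N : ℕ} (h : Fin N → ℂ) (hnorm : ∑ n, ‖h n‖ ^ 2 = 1)
    (hpos : 0 < ∑ n, ‖h n‖ ^ 2 * (cN N n) ^ 2) (ω : ℝ) :
    IsLeast {t : ℝ | ∃ g₁ g₂ : ℂ, ‖g₁‖ ^ 2 + ‖g₂‖ ^ 2 = 1 ∧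
        t = ‖g₁ • sinusoid h ω + g₂ • ((tauW h : ℂ) • sinusoidD h ω)‖ ^ 2}
      (1 - tauW h * |∑ n, ‖h n‖ ^ 2 * cN N n|) := by
  set S := ∑ n, ‖h n‖ ^ 2 * cN N n with hSdef
  set Q := ∑ n, ‖h n‖ ^ 2 * (cN N n) ^ 2 with hQdef
  set τ := tauW h with hτdef
  have hsqQ : 0 < Real.sqrt Q := Real.sqrt_pos.mpr hpos
  have hτpos : 0 < τ := by rw [hτdef, tauW, ← hQdef]; exact inv_pos.mpr hsqQ
  have hexp : ∀ n : Fin N, ‖Complex.exp (Complex.I * (ω * cN N n))‖ = 1 := fun n => by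
    rw [Complex.norm_exp]; simp
  -- norm of x
  have hx : ‖sinusoid h ω‖ = 1 := by
    rw [EuclideanSpace.norm_eq]
    have : (∑ n, ‖sinusoid h ω n‖ ^ 2) = ∑ n, ‖h n‖ ^ 2 :=
      Finset.sum_congr rfl fun n _ => by simp [sinusoid, norm_mul, hexp n]
    rw [this, hnorm, Real.sqrt_one]
  -- norm of x'
  have hy' : ‖sinusoidD h ω‖ = Real.sqrt Q := by
    rw [EuclideanSpace.norm_eq, hQdef]
    congr 1
    refine Finset.sum_congr rfl fun n _ => ?_
    rw [show sinusoidD h ω n = Complex.I * (cN N n : ℂ) * h n *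
      Complex.exp (Complex.I * (ω * cN N n)) from rfl]
    rw [norm_mul, norm_mul, norm_mul, hexp n, Complex.norm_I, Complex.norm_real]
    rw [Real.norm_eq_abs, one_mul, mul_one, mul_pow, sq_abs]
    ring
  have hy : ‖(τ : ℂ) • sinusoidD h ω‖ = 1 := by
    rw [norm_smul, hy', Complex.norm_real, Real.norm_eq_abs, abs_of_pos hτpos,
      hτdef, tauW, ← hQdef, inv_mul_cancel₀ hsqQ.ne']
  -- inner product
  have hin : ⟪sinusoid h ω, sinusoidD h ω⟫ = Complex.I * (S : ℂ) := by
    rw [PiLp.inner_apply]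
    have key : ∀ n : Fin N, (starRingEnd ℂ) (sinusoid h ω n) * sinusoidD h ω n
        = Complex.I * ((‖h n‖ ^ 2 * cN N n : ℝ) : ℂ) := by
      intro n
      set e := Complex.exp (Complex.I * (ω * cN N n)) with hedef
      have h1 : (starRingEnd ℂ) (h n) * h n = ((‖h n‖ ^ 2 : ℝ) : ℂ) := by
        rw [mul_comm, Complex.mul_conj, ← Complex.sq_norm]
      have h2 : (starRingEnd ℂ) e * e = 1 := by
        rw [mul_comm, Complex.mul_conj, ← Complex.sq_norm, hexp n]
        norm_num
      have : (starRingEnd ℂ) (sinusoid h ω n) * sinusoidD h ω n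
          = Complex.I * (cN N n : ℂ) * ((starRingEnd ℂ) (h n) * h n)
            * ((starRingEnd ℂ) e * e) := by
        rw [show sinusoid h ω n = h n * e from rfl,
          show sinusoidD h ω n = Complex.I * (cN N n : ℂ) * h n * e from rfl, map_mul]
        ring
      rw [this, h1, h2]
      push_cast; ring
    rw [show (∑ i, ⟪sinusoid h ω i, sinusoidD h ω i⟫)
        = ∑ n, Complex.I * ((‖h n‖ ^ 2 * cN N n : ℝ) : ℂ) from
      Finset.sum_congr rfl fun n _ => by rw [RCLike.inner_apply, mul_comm]; exact key n,
      ← Finset.mul_sum, ← Complex.ofReal_sum, ← hSdef]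
  have hinτ : ⟪sinusoid h ω, (τ : ℂ) • sinusoidD h ω⟫
      = (τ : ℂ) * (Complex.I * (S : ℂ)) := by
    rw [inner_smul_right, hin]
  -- expansion
  have expand : ∀ g₁ g₂ : ℂ, ‖g₁ • sinusoid h ω + g₂ • ((τ : ℂ) • sinusoidD h ω)‖ ^ 2
      = ‖g₁‖ ^ 2 + ‖g₂‖ ^ 2
        + 2 * Complex.re ((starRingEnd ℂ) g₁ * g₂ * ((τ : ℂ) * (Complex.I * (S : ℂ)))) := by
    intro g₁ g₂
    have e1 := @norm_add_sq ℂ _ _ _ _ (g₁ • sinusoid h ω) (g₂ • ((τ : ℂ) • sinusoidD h ω))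
    rw [inner_smul_left, inner_smul_right, hinτ, norm_smul, norm_smul, hx, hy] at e1
    rw [e1]
    simp only [mul_one, RCLike.re_to_complex]
    ring_nf
  constructor
  · -- membership
    set s := Real.sqrt 2⁻¹ with hsdef
    have hs : s * s = 2⁻¹ := Real.mul_self_sqrt (by norm_num)
    have hsnn : 0 ≤ s := Real.sqrt_nonneg _
    set σ : ℝ := if 0 ≤ S then 1 else -1 with hσdef
    have hσS : σ * S = |S| := by
      rw [hσdef]; split_ifs with h'
      · rw [abs_of_nonneg h']; ring
      · rw [abs_of_neg (not_le.mp h')]; ring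
    refine ⟨(s : ℂ), Complex.I * (σ : ℂ) * (s : ℂ), ?_, ?_⟩
    · have h1 : ‖(s : ℂ)‖ = s := by rw [Complex.norm_real, Real.norm_eq_abs, abs_of_nonneg hsnn]
      have h2 : ‖Complex.I * (σ : ℂ) * (s : ℂ)‖ = s := by
        rw [norm_mul, norm_mul, Complex.norm_I, h1, Complex.norm_real, Real.norm_eq_abs]
        have : |σ| = 1 := by rw [hσdef]; split_ifs <;> norm_num
        rw [this]; ring
      rw [h1, h2]; nlinarith [hs]
    · rw [expand]
      have hz : (starRingEnd ℂ) (s : ℂ) * (Complex.I * (σ : ℂ) * (s : ℂ))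
          * ((τ : ℂ) * (Complex.I * (S : ℂ)))
          = ((-(s * s * σ * τ * S) : ℝ) : ℂ) := by
        rw [Complex.conj_ofReal]
        push_cast
        linear_combination ((s : ℂ) * s * σ * τ * S) * Complex.I_sq
      rw [hz]
      have h1 : ‖(s : ℂ)‖ = s := by rw [Complex.norm_real, Real.norm_eq_abs, abs_of_nonneg hsnn]
      have h2 : ‖Complex.I * (σ : ℂ) * (s : ℂ)‖ = s := by
        rw [norm_mul, norm_mul, Complex.norm_I, h1, Complex.norm_real, Real.norm_eq_abs]
        have : |σ| = 1 := by rw [hσdef]; split_ifs <;> norm_num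
        rw [this]; ring
      rw [h1, h2, Complex.ofReal_re]
      have : s * s * σ * τ * S = 2⁻¹ * (τ * |S|) := by
        rw [hs]; nlinarith [hσS]
      rw [this]; nlinarith [hs]
  · -- lower bound
    rintro t ⟨g₁, g₂, hg, rfl⟩
    rw [expand]
    set z := (starRingEnd ℂ) g₁ * g₂ * ((τ : ℂ) * (Complex.I * (S : ℂ))) with hzdef
    have hznorm : ‖z‖ = ‖g₁‖ * ‖g₂‖ * (τ * |S|) := by
      simp only [hzdef, norm_mul, RCLike.norm_conj, Complex.norm_I, Complex.norm_real,
        Real.norm_eq_abs, abs_of_pos hτpos]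
      ring
    have hre : -(‖z‖) ≤ Complex.re z := by
      have := Complex.abs_re_le_norm z
      linarith [abs_le.mp this |>.1]
    have h2ab : 2 * (‖g₁‖ * ‖g₂‖) ≤ 1 := by nlinarith [sq_nonneg (‖g₁‖ - ‖g₂‖)]
    have hτS : 0 ≤ τ * |S| := mul_nonneg hτpos.le (abs_nonneg S)
    have hprod : 0 ≤ (1 - 2 * (‖g₁‖ * ‖g₂‖)) * (τ * |S|) :=
      mul_nonneg (by linarith) hτS
    rw [hznorm] at hre
    nlinarith [hre, hg]
end

section
/- Let N ∈ ℕ and let h₁,…,h_N ∈ ℂ be window weights with Σ_n |h_n|² = 1. Then for all ω, δ ∈ ℝ, the first-order Taylor remainder of the windowed sinusoid satisfies ‖x(ω + δ) − x(ω) − δ·x′(ω)‖ ≤ N²δ²/8. -/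
open scoped BigOperators

open Complex intervalIntegral


lemma expderiv (s : ℝ) : HasDerivAt (fun t : ℝ => Complex.exp (Complex.I * t))
    (Complex.exp (Complex.I * s) * Complex.I) s := by
  have h1 : HasDerivAt (fun t : ℝ => (Complex.I * t : ℂ)) Complex.I s := by
    simpa using (Complex.ofRealCLM.hasDerivAt (x := s)).const_mul Complex.I
  simpa using h1.cexp

lemma exp_sub_one_le (s : ℝ) : ‖Complex.exp (Complex.I * s) - 1‖ ≤ |s| := by
  have := (convex_univ (𝕜 := ℝ)).norm_image_sub_le_of_norm_hasDerivWithin_le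
    (f := fun t : ℝ => Complex.exp (Complex.I * t))
    (f' := fun t : ℝ => Complex.exp (Complex.I * t) * Complex.I) (C := 1)
    (fun x _ => (expderiv x).hasDerivWithinAt)
    (fun x _ => by simp only [norm_mul, Complex.norm_I, mul_one, Complex.norm_exp]; simp) (Set.mem_univ 0) (Set.mem_univ s)
  simpa [Real.norm_eq_abs] using this

lemma key_nonneg (t : ℝ) (ht : 0 ≤ t) :
    ‖Complex.exp (Complex.I * t) - 1 - Complex.I * t‖ ≤ t ^ 2 / 2 := by
  have hderiv : ∀ s ∈ Set.uIcc (0:ℝ) t,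
      HasDerivAt (fun u : ℝ => Complex.exp (Complex.I * u) - 1 - Complex.I * u)
        (Complex.exp (Complex.I * s) * Complex.I - Complex.I) s := by
    intro s _
    have h1 : HasDerivAt (fun t : ℝ => (Complex.I * t : ℂ)) Complex.I s := by
      simpa using (Complex.ofRealCLM.hasDerivAt (x := s)).const_mul Complex.I
    exact ((expderiv s).sub_const 1).sub h1
  have hcont : IntervalIntegrable
      (fun s : ℝ => Complex.exp (Complex.I * s) * Complex.I - Complex.I) MeasureTheory.volume 0 t :=
    (Continuous.intervalIntegrable (by continuity) _ _)
  have hftc := intervalIntegral.integral_eq_sub_of_hasDerivAt hderiv hcont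
  simp only [Complex.ofReal_zero, mul_zero, Complex.exp_zero, sub_zero, sub_self] at hftc
  rw [← hftc]
  have hb : ∀ᵐ (s : ℝ) ∂(MeasureTheory.volume : MeasureTheory.Measure ℝ).restrict (Set.uIoc (0:ℝ) t),
      ‖Complex.exp (Complex.I * s) * Complex.I - Complex.I‖ ≤ s := by
    refine MeasureTheory.ae_restrict_of_forall_mem measurableSet_uIoc ?_
    intro s hs
    have hs' : 0 ≤ s := by
      rcases Set.mem_uIoc.1 hs with h | h
      · exact h.1.le
      · linarith [h.1, h.2]
    calc ‖Complex.exp (Complex.I * s) * Complex.I - Complex.I‖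
        = ‖(Complex.exp (Complex.I * s) - 1) * Complex.I‖ := by ring_nf
      _ = ‖Complex.exp (Complex.I * s) - 1‖ := by simp
      _ ≤ |s| := exp_sub_one_le s
      _ = s := abs_of_nonneg hs'
  have := intervalIntegral.norm_integral_le_abs_of_norm_le hb
    ((continuous_id).intervalIntegrable 0 t)
  calc ‖∫ s in (0:ℝ)..t, (Complex.exp (Complex.I * s) * Complex.I - Complex.I)‖
      ≤ |∫ s in (0:ℝ)..t, s| := this
    _ = t ^ 2 / 2 := by
        rw [integral_id, show (t^2 - 0^2)/2 = t^2/2 by ring]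
        exact _root_.abs_of_nonneg (by positivity)

lemma key (t : ℝ) : ‖Complex.exp (Complex.I * t) - 1 - Complex.I * t‖ ≤ t ^ 2 / 2 := by
  rcases le_or_gt 0 t with ht | ht
  · exact key_nonneg t ht
  · have h := key_nonneg (-t) (by linarith)
    have hc : Complex.exp (Complex.I * (-t : ℝ)) - 1 - Complex.I * (-t : ℝ)
        = (starRingEnd ℂ) (Complex.exp (Complex.I * t) - 1 - Complex.I * t) := by
      rw [map_sub, map_sub, ← Complex.exp_conj]
      simp
    rw [hc, RCLike.norm_conj] at h
    simpa using h

/-- First-order Taylor remainder bound for the windowed sinusoid: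
`‖x(ω+δ) − x(ω) − δ x′(ω)‖ ≤ N²δ²/8`. -/
theorem stmt13 {N : ℕ} (h : Fin N → ℂ) (hnorm : ∑ n, ‖h n‖ ^ 2 = 1) (ω δ : ℝ) :
    ‖sinusoid h (ω + δ) - sinusoid h ω - (δ : ℂ) • sinusoidD h ω‖ ≤
      (N : ℝ) ^ 2 * δ ^ 2 / 8 := by
  set B : ℝ := (N : ℝ) ^ 2 * δ ^ 2 / 8 with hB
  have hBnn : 0 ≤ B := by positivity
  have hentry : ∀ n : Fin N,
      ‖(sinusoid h (ω + δ) - sinusoid h ω - (δ : ℂ) • sinusoidD h ω) n‖ ≤ ‖h n‖ * B := by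
    intro n
    have heq : (sinusoid h (ω + δ) - sinusoid h ω - (δ : ℂ) • sinusoidD h ω) n
        = h n * Complex.exp (Complex.I * (ω * cN N n)) *
          (Complex.exp (Complex.I * (δ * cN N n)) - 1 - Complex.I * (δ * cN N n)) := by
      simp only [PiLp.sub_apply, PiLp.smul_apply, sinusoid, sinusoidD, PiLp.toLp_apply, smul_eq_mul]
      rw [show ((ω + δ : ℝ) : ℂ) * (cN N n : ℂ) = (ω * cN N n : ℝ) + (δ * cN N n : ℝ) by
        push_cast; ring]
      rw [mul_add, Complex.exp_add]
      push_cast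
      ring
    rw [heq]
    rw [norm_mul, norm_mul]
    have hexp : ‖Complex.exp (Complex.I * ((ω : ℂ) * (cN N n : ℂ)))‖ = 1 := by
      rw [Complex.norm_exp]
      simp [mul_comm]
    rw [hexp, mul_one]
    have hkey := key (δ * cN N n)
    push_cast at hkey
    have hc2 : (cN N n : ℝ) ^ 2 ≤ (N : ℝ) ^ 2 / 4 := by
      have h1 : (n : ℝ) ≤ (N : ℝ) - 1 := by
        have := n.isLt
        have : (n : ℝ) + 1 ≤ (N : ℝ) := by exact_mod_cast this
        linarith
      have h2 : (0 : ℝ) ≤ (n : ℝ) := Nat.cast_nonneg _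
      have hub : cN N n ≤ (N : ℝ) / 2 := by unfold cN; linarith
      have hlb : -((N : ℝ) / 2) ≤ cN N n := by unfold cN; linarith
      nlinarith
    have hBge : (δ * cN N n) ^ 2 / 2 ≤ B := by
      rw [hB]
      nlinarith [sq_nonneg δ, sq_nonneg (cN N n), sq_nonneg ((N:ℝ)*δ)]
    exact mul_le_mul_of_nonneg_left (hkey.trans hBge) (norm_nonneg _)
  rw [EuclideanSpace.norm_eq]
  have hsum : ∑ n, ‖(sinusoid h (ω + δ) - sinusoid h ω - (δ : ℂ) • sinusoidD h ω) n‖ ^ 2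
      ≤ B ^ 2 := by
    calc ∑ n, ‖(sinusoid h (ω + δ) - sinusoid h ω - (δ : ℂ) • sinusoidD h ω) n‖ ^ 2
        ≤ ∑ n, (‖h n‖ * B) ^ 2 := by
          apply Finset.sum_le_sum
          intro n _
          exact pow_le_pow_left₀ (norm_nonneg _) (hentry n) 2
      _ = B ^ 2 := by
          simp only [mul_pow, ← Finset.sum_mul]
          rw [hnorm, one_mul]
  calc Real.sqrt (∑ n, ‖(sinusoid h (ω + δ) - sinusoid h ω - (δ : ℂ) • sinusoidD h ω) n‖ ^ 2)
      ≤ Real.sqrt (B ^ 2) := Real.sqrt_le_sqrt hsum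
    _ = B := by rw [Real.sqrt_sq hBnn]
end
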